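/- The free tree monoid FT(X) on a totally ordered finite alphabet X is R-trivial. -/

import Mathlib

/-- The defining relations of the free tree monoid `FT(X)`: `x·x = x` for every `x`, and
`y·x·y = y·x` whenever `x < y`. -/
def ftRel (X : Type*) [LinearOrder X] : FreeMonoid X → FreeMonoid X → Prop := fun a b =>
  (∃ x : X, a = FreeMonoid.of x * FreeMonoid.of x ∧ b = FreeMonoid.of x) ∨
  (∃ x y : X, x < y ∧ a = FreeMonoid.of y * FreeMonoid.of x * FreeMonoid.of y ∧
    b = FreeMonoid.of y * FreeMonoid.of x)

/-- The free tree monoid `FT(X)` on a totally ordered alphabet `X`. -/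
def FreeTreeMonoid (X : Type*) [LinearOrder X] :=
  (conGen (ftRel X)).Quotient

noncomputable instance (X : Type*) [LinearOrder X] : Monoid (FreeTreeMonoid X) :=
  Con.monoid (conGen (ftRel X))

namespace FTM

variable {X : Type*} [LinearOrder X]

/-- `Abs x t` : `x` occurs in `t` and everything after some occurrence is `< x`. -/
def Abs (x : X) : List X → Prop
  | [] => False
  | a :: t => Abs x t ∨ (a = x ∧ ∀ z ∈ t, z < x)

instance Abs.dec (x : X) : ∀ t : List X, Decidable (Abs x t)
  | [] => isFalse (fun h => h)
  | _ :: t => @instDecidableOr _ _ (Abs.dec x t) _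

def step (r : List X) (x : X) : List X := if Abs x r then r else r ++ [x]

def nfApp (r w : List X) : List X := w.foldl step r

def nf (w : List X) : List X := nfApp [] w

lemma nfApp_nil (r : List X) : nfApp r [] = r := rfl

lemma nfApp_cons (r : List X) (x : X) (w : List X) :
    nfApp r (x :: w) = nfApp (step r x) w := rfl

lemma nfApp_append (r u v : List X) : nfApp r (u ++ v) = nfApp (nfApp r u) v :=
  List.foldl_append ..

lemma step_of_abs {x : X} {r : List X} (h : Abs x r) : step r x = r := by
  rw [step, if_pos h]

lemma step_of_not_abs {x : X} {r : List X} (h : ¬ Abs x r) : step r x = r ++ [x] := by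
  rw [step, if_neg h]

lemma abs_append_singleton (y z : X) (t : List X) :
    Abs y (t ++ [z]) ↔ (Abs y t ∧ z < y) ∨ z = y := by
  induction t with
  | nil => simp [Abs]
  | cons a t ih =>
    have haux : (∀ w ∈ t ++ [z], w < y) ↔ (∀ w ∈ t, w < y) ∧ z < y := by
      constructor
      · intro hh
        exact ⟨fun w hw => hh w (List.mem_append.mpr (Or.inl hw)),
          hh z (List.mem_append.mpr (Or.inr (List.mem_singleton_self z)))⟩
      · rintro ⟨ha, hb⟩ w hw
        rcases List.mem_append.mp hw with hw | hw
        · exact ha w hw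
        · rw [List.mem_singleton.mp hw]; exact hb
    show (Abs y (t ++ [z]) ∨ (a = y ∧ ∀ w ∈ t ++ [z], w < y)) ↔ _
    rw [ih, haux]
    show _ ↔ ((Abs y t ∨ (a = y ∧ ∀ w ∈ t, w < y)) ∧ z < y) ∨ z = y
    tauto

lemma abs_step (y z : X) (t : List X) :
    Abs y (step t z) ↔ z = y ∨ (Abs y t ∧ (z < y ∨ Abs z t)) := by
  by_cases h : Abs z t
  · rw [step_of_abs h]
    constructor
    · exact fun hy => Or.inr ⟨hy, Or.inr h⟩
    · rintro (rfl | ⟨hy, _⟩)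
      exacts [h, hy]
  · rw [step_of_not_abs h, abs_append_singleton]
    tauto

lemma abs_nfApp_of_small {z : X} {w : List X} (hw : ∀ l ∈ w, l < z) :
    ∀ t : List X, Abs z t → Abs z (nfApp t w) := by
  induction w with
  | nil => exact fun t h => h
  | cons l w ih =>
    intro t ht
    rw [nfApp_cons]
    refine ih (fun a ha => hw a (List.mem_cons_of_mem _ ha)) _ ?_
    rw [abs_step]
    exact Or.inr ⟨ht, Or.inl (hw l List.mem_cons_self)⟩

lemma abs_to_nfApp {z : X} : ∀ w r : List X, Abs z w → Abs z (nfApp r w) := by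
  intro w
  induction w with
  | nil => exact fun r h => h.elim
  | cons a w ih =>
    intro r h
    rw [nfApp_cons]
    rcases h with h | ⟨rfl, hsmall⟩
    · exact ih _ h
    · refine abs_nfApp_of_small hsmall _ ?_
      rw [abs_step]
      exact Or.inl rfl

lemma prefix_step (r : List X) (x : X) : r <+: step r x := by
  by_cases h : Abs x r
  · rw [step_of_abs h]
  · rw [step_of_not_abs h]; exact ⟨[x], rfl⟩

lemma prefix_nfApp (w : List X) : ∀ r : List X, r <+: nfApp r w := by
  induction w with
  | nil => exact fun r => List.prefix_refl r
  | cons x w ih => exact fun r => (prefix_step r x).trans (ih (step r x))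

lemma nfApp_nfApp (c : List X) : ∀ s r : List X, nfApp r (nfApp s c) = nfApp r (s ++ c) := by
  induction c with
  | nil => simp [nfApp]
  | cons x c ih =>
    intro s r
    rw [nfApp_cons]
    by_cases h : Abs x s
    · rw [step_of_abs h, ih s r]
      have h2 : s ++ x :: c = (s ++ [x]) ++ c := by simp
      rw [h2, nfApp_append r (s ++ [x]) c, nfApp_append r s [x]]
      have h3 : nfApp (nfApp r s) [x] = nfApp r s := by
        show step (nfApp r s) x = nfApp r s
        exact step_of_abs (abs_to_nfApp s r h)
      rw [h3, nfApp_append r s c]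
    · rw [step_of_not_abs h, ih (s ++ [x]) r]
      congr 1
      simp

lemma nf_append (a c : List X) : nf (a ++ c) = nfApp (nf a) (nf c) := by
  rw [nf, nfApp_append]
  have := nfApp_nfApp c [] (nf a)
  simpa [nf] using this.symm

/-- The congruence "same normal form". -/
def cNF : Con (FreeMonoid X) where
  r a b := nf (FreeMonoid.toList a) = nf (FreeMonoid.toList b)
  iseqv := ⟨fun _ => rfl, Eq.symm, Eq.trans⟩
  mul' := by
    intro w x y z h1 h2
    show nf (FreeMonoid.toList (w * y)) = nf (FreeMonoid.toList (x * z))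
    rw [FreeMonoid.toList_mul, FreeMonoid.toList_mul, nf_append, nf_append, h1, h2]

lemma nf_sq (x : X) : nf [x, x] = [x] := by
  have h1 : ¬ Abs x ([] : List X) := fun h => h
  have h2 : Abs x [x] := Or.inr ⟨rfl, by simp⟩
  have e1 : step ([] : List X) x = [x] := by rw [step_of_not_abs h1]; rfl
  show step (step [] x) x = [x]
  rw [e1, step_of_abs h2]

lemma nf_yxy {x y : X} (h : x < y) : nf [y, x, y] = [y, x] ∧ nf [y, x] = [y, x] := by
  have h1 : ¬ Abs y ([] : List X) := fun hh => hh
  have h2 : ¬ Abs x [y] := by simp [Abs, h.ne']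
  have h3 : Abs y [y, x] := Or.inr ⟨rfl, by simpa using h⟩
  have e1 : step ([] : List X) y = [y] := by rw [step_of_not_abs h1]; rfl
  have e2 : step [y] x = [y, x] := by rw [step_of_not_abs h2]; rfl
  constructor
  · show step (step (step [] y) x) y = [y, x]
    rw [e1, e2, step_of_abs h3]
  · show step (step [] y) x = [y, x]
    rw [e1, e2]

lemma conGen_le_cNF : conGen (ftRel X) ≤ (cNF : Con (FreeMonoid X)) := by
  refine (Con.conGen_le).mpr fun a b hab => ?_
  rcases hab with (⟨x, rfl, rfl⟩ | ⟨x, y, hxy, rfl, rfl⟩)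
  · show nf [x, x] = nf [x]
    rw [nf_sq]
    rfl
  · show nf [y, x, y] = nf [y, x]
    rw [(nf_yxy hxy).1, (nf_yxy hxy).2]

/-- Decomposition from `Abs`. -/
lemma abs_decomp {x : X} : ∀ {r : List X}, Abs x r →
    ∃ r₁ r₂ : List X, r = r₁ ++ x :: r₂ ∧ ∀ z ∈ r₂, z < x := by
  intro r
  induction r with
  | nil => exact fun h => h.elim
  | cons a t ih =>
    rintro (h | ⟨rfl, hs⟩)
    · obtain ⟨r₁, r₂, rfl, hr⟩ := ih h
      exact ⟨a :: r₁, r₂, rfl, hr⟩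
    · exact ⟨[], t, rfl, hs⟩

local notation "C" => conGen (ftRel X)

lemma small_rel {x : X} : ∀ {r₂ : List X}, (∀ z ∈ r₂, z < x) →
    C (FreeMonoid.ofList (x :: (r₂ ++ [x]))) (FreeMonoid.ofList (x :: r₂)) := by
  intro r₂
  induction r₂ with
  | nil =>
    intro _
    exact ConGen.Rel.of _ _ (Or.inl ⟨x, rfl, rfl⟩)
  | cons z r₂ ih =>
    intro hs
    have hz : z < x := hs z List.mem_cons_self
    have hrec := ih (fun a ha => hs a (List.mem_cons_of_mem _ ha))
    have e1 : C (FreeMonoid.ofList [x, z, x]) (FreeMonoid.ofList [x, z]) :=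
      ConGen.Rel.of _ _ (Or.inr ⟨z, x, hz, rfl, rfl⟩)
    have s1 : C (FreeMonoid.ofList [x, z] * FreeMonoid.ofList (r₂ ++ [x]))
        (FreeMonoid.ofList [x, z, x] * FreeMonoid.ofList (r₂ ++ [x])) :=
      (conGen (ftRel X)).mul ((conGen (ftRel X)).symm e1)
        ((conGen (ftRel X)).refl (FreeMonoid.ofList (r₂ ++ [x])))
    have s2 : C (FreeMonoid.ofList [x, z] * FreeMonoid.ofList (x :: (r₂ ++ [x])))
        (FreeMonoid.ofList [x, z] * FreeMonoid.ofList (x :: r₂)) :=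
      (conGen (ftRel X)).mul ((conGen (ftRel X)).refl (FreeMonoid.ofList [x, z])) hrec
    have s3 : C (FreeMonoid.ofList [x, z, x] * FreeMonoid.ofList r₂)
        (FreeMonoid.ofList [x, z] * FreeMonoid.ofList r₂) :=
      (conGen (ftRel X)).mul e1 ((conGen (ftRel X)).refl (FreeMonoid.ofList r₂))
    exact (conGen (ftRel X)).trans
      (show C (FreeMonoid.ofList (x :: (z :: r₂ ++ [x])))
          (FreeMonoid.ofList [x, z] * FreeMonoid.ofList (x :: (r₂ ++ [x]))) from s1)
      ((conGen (ftRel X)).trans s2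
        (show C (FreeMonoid.ofList [x, z] * FreeMonoid.ofList (x :: r₂))
          (FreeMonoid.ofList (x :: z :: r₂)) from s3))

lemma abs_rel {x : X} {r : List X} (h : Abs x r) :
    C (FreeMonoid.ofList (r ++ [x])) (FreeMonoid.ofList r) := by
  obtain ⟨r₁, r₂, rfl, hr⟩ := abs_decomp h
  have := small_rel (x := x) hr
  have h2 := (conGen (ftRel X)).mul ((conGen (ftRel X)).refl (FreeMonoid.ofList r₁)) this
  have key1 : FreeMonoid.ofList ((r₁ ++ x :: r₂) ++ [x])
      = FreeMonoid.ofList r₁ * FreeMonoid.ofList (x :: (r₂ ++ [x])) := by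
    rw [← FreeMonoid.ofList_append]
    congr 1
    simp
  have key2 : FreeMonoid.ofList (r₁ ++ x :: r₂)
      = FreeMonoid.ofList r₁ * FreeMonoid.ofList (x :: r₂) :=
    FreeMonoid.ofList_append _ _
  rw [key1, key2]
  exact h2

lemma rel_nf : ∀ (w r : List X),
    C (FreeMonoid.ofList (r ++ w)) (FreeMonoid.ofList (nfApp r w)) := by
  intro w
  induction w with
  | nil => intro r; simpa [nfApp_nil] using (conGen (ftRel X)).refl (FreeMonoid.ofList r)
  | cons x w ih =>
    intro r
    rw [nfApp_cons]
    by_cases h : Abs x r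
    · rw [step_of_abs h]
      refine (conGen (ftRel X)).trans ?_ (ih r)
      have h2 : r ++ x :: w = (r ++ [x]) ++ w := by simp
      rw [h2, FreeMonoid.ofList_append, FreeMonoid.ofList_append]
      exact (conGen (ftRel X)).mul (abs_rel h) ((conGen (ftRel X)).refl _)
    · rw [step_of_not_abs h]
      have h2 : r ++ x :: w = (r ++ [x]) ++ w := by simp
      rw [h2]
      exact ih (r ++ [x])

lemma rel_iff_nf (a b : FreeMonoid X) :
    C a b ↔ nf (FreeMonoid.toList a) = nf (FreeMonoid.toList b) := by
  constructor
  · exact fun h => conGen_le_cNF h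
  · intro h
    have ha := rel_nf (FreeMonoid.toList a) []
    have hb := rel_nf (FreeMonoid.toList b) []
    simp only [List.nil_append] at ha hb
    rw [show nfApp [] (FreeMonoid.toList a) = nf (FreeMonoid.toList a) from rfl, h] at ha
    exact (conGen (ftRel X)).trans ha ((conGen (ftRel X)).symm hb)

end FTM

theorem freeTreeMonoid_rTrivial {X : Type*} [LinearOrder X] [Fintype X] :
    ∀ m m' : FreeTreeMonoid X,
      {z : FreeTreeMonoid X | ∃ t, m * t = z} = {z : FreeTreeMonoid X | ∃ t, m' * t = z} →
      m = m' := by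
  intro m m' h
  have h1 : ∃ t, m * t = m' := by
    have : m' ∈ {z : FreeTreeMonoid X | ∃ t, m' * t = z} := ⟨1, mul_one m'⟩
    rw [← h] at this
    exact this
  have h2 : ∃ t, m' * t = m := by
    have : m ∈ {z : FreeTreeMonoid X | ∃ t, m * t = z} := ⟨1, mul_one m⟩
    rw [h] at this
    exact this
  obtain ⟨t, ht⟩ := h1
  obtain ⟨s, hs⟩ := h2
  obtain ⟨a, rfl⟩ := Con.mk'_surjective (c := conGen (ftRel X)) m
  obtain ⟨b, rfl⟩ := Con.mk'_surjective (c := conGen (ftRel X)) m'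
  obtain ⟨tw, rfl⟩ := Con.mk'_surjective (c := conGen (ftRel X)) t
  obtain ⟨sw, rfl⟩ := Con.mk'_surjective (c := conGen (ftRel X)) s
  have ht2 : ((a * tw : FreeMonoid X) : (conGen (ftRel X)).Quotient) = ↑b := by
    rw [Con.coe_mul]; exact ht
  have hs2 : ((b * sw : FreeMonoid X) : (conGen (ftRel X)).Quotient) = ↑a := by
    rw [Con.coe_mul]; exact hs
  have ht' : (conGen (ftRel X)) (a * tw) b := ((conGen (ftRel X)).eq).mp ht2
  have hs' : (conGen (ftRel X)) (b * sw) a := ((conGen (ftRel X)).eq).mp hs2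
  rw [FTM.rel_iff_nf] at ht' hs'
  rw [FreeMonoid.toList_mul, FTM.nf_append] at ht' hs'
  -- nf a is a prefix of nf b and vice versa
  have p1 : FTM.nf (FreeMonoid.toList a) <+: FTM.nf (FreeMonoid.toList b) := by
    rw [← ht']
    exact FTM.prefix_nfApp _ _
  have p2 : FTM.nf (FreeMonoid.toList b) <+: FTM.nf (FreeMonoid.toList a) := by
    rw [← hs']
    exact FTM.prefix_nfApp _ _
  have hlen : (FTM.nf (FreeMonoid.toList a)).length = (FTM.nf (FreeMonoid.toList b)).length :=
    le_antisymm p1.length_le p2.length_le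
  have hnf : FTM.nf (FreeMonoid.toList a) = FTM.nf (FreeMonoid.toList b) :=
    p1.eq_of_length hlen
  show ((a : FreeMonoid X) : (conGen (ftRel X)).Quotient) = ↑b
  exact ((conGen (ftRel X)).eq).mpr ((FTM.rel_iff_nf a b).mpr hnf)
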